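/- Let a > 0, b > 0, c > 0, u₀ ∈ ℝ, and let u be an axisymmetric stationary rotating profile on [0, c] with u(0) = u₀, i.e. u is differentiable on [0, c] and u'(r)/√(1 + u'(r)²) = r(a r² + 2b)/4 for all r ∈ [0, c]. Let A(c) = 2π ∫₀^c r √(1 + u'(r)²) dr denote the area of the corresponding surface of revolution. Then (4π/b²)(2 − √(4 − b² c²)) < A(c) < 8π (4 − √(16 − c²(a c² + 2b)²)) / (a c² + 2b)². -/

import Mathlib

open Set intervalIntegral MeasureTheory


lemma aux_sqrt (s t : ℝ) (h : s / Real.sqrt (1 + s ^ 2) = t) :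
    t ^ 2 < 1 ∧ Real.sqrt (1 + s ^ 2) = 1 / Real.sqrt (1 - t ^ 2) := by
  have h1 : (0:ℝ) < 1 + s ^ 2 := by positivity
  have hq : 0 < Real.sqrt (1 + s ^ 2) := Real.sqrt_pos.2 h1
  have hq2 : Real.sqrt (1 + s ^ 2) ^ 2 = 1 + s ^ 2 := Real.sq_sqrt h1.le
  have ht2 : t ^ 2 = s ^ 2 / (1 + s ^ 2) := by
    rw [← h, div_pow, hq2]
  have hlt : t ^ 2 < 1 := by
    rw [ht2, div_lt_one h1]; linarith
  refine ⟨hlt, ?_⟩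
  have h2 : 1 - t ^ 2 = 1 / (1 + s ^ 2) := by
    rw [ht2]; field_simp; ring
  rw [h2, show (1:ℝ)/(1+s^2) = (1+s^2)⁻¹ from one_div _, Real.sqrt_inv, one_div, inv_inv]

lemma aux_int (m c : ℝ) (hm : 0 < m) (hc : 0 < c) (h : m ^ 2 * c ^ 2 < 1) :
    ∫ r in (0:ℝ)..c, r / Real.sqrt (1 - m ^ 2 * r ^ 2)
      = (1 - Real.sqrt (1 - m ^ 2 * c ^ 2)) / m ^ 2 := by
  have hpos : ∀ r ∈ Icc (0:ℝ) c, 0 < 1 - m ^ 2 * r ^ 2 := by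
    intro r hr
    have : m ^ 2 * r ^ 2 ≤ m ^ 2 * c ^ 2 := by
      obtain ⟨h1,h2⟩ := hr; nlinarith [mul_self_le_mul_self h1 h2, sq_nonneg m]
    linarith
  have hcont : ContinuousOn (fun r : ℝ => r / Real.sqrt (1 - m ^ 2 * r ^ 2)) (Icc 0 c) := by
    apply continuousOn_id.div
    · exact (continuousOn_const.sub (continuousOn_const.mul (continuousOn_pow 2))).sqrt
    · intro r hr
      exact (Real.sqrt_pos.2 (hpos r hr)).ne'
  have huIcc : uIcc (0:ℝ) c = Icc 0 c := uIcc_of_le hc.le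
  have hFTC := intervalIntegral.integral_eq_sub_of_hasDerivAt
    (f := fun r => -Real.sqrt (1 - m ^ 2 * r ^ 2) / m ^ 2)
    (f' := fun r => r / Real.sqrt (1 - m ^ 2 * r ^ 2)) (a := (0:ℝ)) (b := c)
    (fun r hr => ?_) ((hcont.mono (by rw [huIcc])).intervalIntegrable)
  · rw [hFTC]
    norm_num
    ring
  · rw [huIcc] at hr
    have hp := hpos r hr
    have h1 : HasDerivAt (fun x : ℝ => 1 - m ^ 2 * x ^ 2) (-(m ^ 2 * (2 * r))) r := by
      have := ((hasDerivAt_pow 2 r).const_mul (m ^ 2)).const_sub 1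
      simpa using this
    have h2 : HasDerivAt (fun x => -Real.sqrt (1 - m ^ 2 * x ^ 2) / m ^ 2) _ r :=
      (h1.sqrt hp.ne').neg.div_const (m ^ 2)
    refine h2.congr_deriv ?_
    have hs : Real.sqrt (1 - m ^ 2 * r ^ 2) ≠ 0 := (Real.sqrt_pos.2 hp).ne'
    have hsq : Real.sqrt (1 - m ^ 2 * r ^ 2) ^ 2 = 1 - m ^ 2 * r ^ 2 := Real.sq_sqrt hp.le
    field_simp


lemma aux_lt {c : ℝ} (hc : 0 < c) {g h : ℝ → ℝ}
    (hg : IntervalIntegrable g volume 0 c) (hh : IntervalIntegrable h volume 0 c)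
    (hlt : ∀ r ∈ Ioo (0:ℝ) c, g r < h r) :
    ∫ r in (0:ℝ)..c, g r < ∫ r in (0:ℝ)..c, h r := by
  have hp := intervalIntegral_pos_of_pos_on (hh.sub hg)
    (fun x hx => sub_pos.2 (hlt x hx)) hc
  rw [intervalIntegral.integral_sub hh hg] at hp
  linarith

set_option maxHeartbeats 1000000 in
/-- Theorem (area estimates): for an axisymmetric profile of type I on `[0,c]` with
`a > 0`, `b > 0`, the area `A(c) = 2π ∫₀^c r√(1+u'(r)²) dr` satisfies
`(4π/b²)(2 - √(4 - b²c²)) < A(c) < 8π(4 - √(16 - c²(ac²+2b)²))/(ac²+2b)²`. -/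
theorem stmt_7 (a b c u₀ : ℝ) (ha : 0 < a) (hb : 0 < b) (hc : 0 < c)
    (u u' : ℝ → ℝ)
    (hu : ∀ r ∈ Icc (0:ℝ) c, HasDerivAt u (u' r) r)
    (heq : ∀ r ∈ Icc (0:ℝ) c, u' r / Real.sqrt (1 + u' r ^ 2) = r * (a * r ^ 2 + 2 * b) / 4)
    (h0 : u 0 = u₀) :
    4 * Real.pi / b ^ 2 * (2 - Real.sqrt (4 - b ^ 2 * c ^ 2)) <
        2 * Real.pi * ∫ r in (0:ℝ)..c, r * Real.sqrt (1 + u' r ^ 2) ∧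
      2 * Real.pi * ∫ r in (0:ℝ)..c, r * Real.sqrt (1 + u' r ^ 2) <
        8 * Real.pi * (4 - Real.sqrt (16 - c ^ 2 * (a * c ^ 2 + 2 * b) ^ 2)) /
          (a * c ^ 2 + 2 * b) ^ 2 := by
  set f : ℝ → ℝ := fun r => r * (a * r ^ 2 + 2 * b) / 4 with hf
  have hkey : ∀ r ∈ Icc (0:ℝ) c, (f r) ^ 2 < 1 ∧
      Real.sqrt (1 + u' r ^ 2) = 1 / Real.sqrt (1 - (f r) ^ 2) :=
    fun r hr => aux_sqrt (u' r) (f r) (heq r hr)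
  have huIcc : uIcc (0:ℝ) c = Icc 0 c := uIcc_of_le hc.le
  -- replace the integral by an explicit one
  have hcong : (∫ r in (0:ℝ)..c, r * Real.sqrt (1 + u' r ^ 2))
      = ∫ r in (0:ℝ)..c, r / Real.sqrt (1 - (f r) ^ 2) := by
    apply intervalIntegral.integral_congr
    intro r hr
    rw [huIcc] at hr
    show r * Real.sqrt (1 + u' r ^ 2) = r / Real.sqrt (1 - f r ^ 2)
    rw [(hkey r hr).2]
    ring
  set m₁ : ℝ := b / 2 with hm₁
  set m₂ : ℝ := (a * c ^ 2 + 2 * b) / 4 with hm₂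
  have hm₁0 : 0 < m₁ := by positivity
  have hm₂0 : 0 < m₂ := by positivity
  have hfc : f c = m₂ * c := by rw [hf, hm₂]; ring
  have hm₂c : m₂ ^ 2 * c ^ 2 < 1 := by
    have := (hkey c ⟨hc.le, le_refl c⟩).1
    rw [hfc] at this; nlinarith
  have hm₁c : m₁ ^ 2 * c ^ 2 < 1 := by
    have h12 : m₁ < m₂ := by rw [hm₁, hm₂]; nlinarith [mul_pos ha (pow_pos hc 2)]
    nlinarith
  -- positivity of denominators on Icc
  have hpos1 : ∀ r ∈ Icc (0:ℝ) c, 0 < 1 - m₁ ^ 2 * r ^ 2 := by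
    intro r hr; obtain ⟨h1, h2⟩ := hr
    nlinarith [mul_self_le_mul_self h1 h2, sq_nonneg m₁]
  have hpos2 : ∀ r ∈ Icc (0:ℝ) c, 0 < 1 - m₂ ^ 2 * r ^ 2 := by
    intro r hr; obtain ⟨h1, h2⟩ := hr
    nlinarith [mul_self_le_mul_self h1 h2, sq_nonneg m₂]
  have hposf : ∀ r ∈ Icc (0:ℝ) c, 0 < 1 - (f r) ^ 2 := by
    intro r hr; have := (hkey r hr).1; linarith
  -- integrability
  have hint : ∀ g : ℝ → ℝ, ContinuousOn g (Icc 0 c) →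
      (∀ r ∈ Icc (0:ℝ) c, 0 < 1 - g r ^ 2) →
      IntervalIntegrable (fun r => r / Real.sqrt (1 - g r ^ 2)) volume 0 c := by
    intro g hg hgp
    apply ContinuousOn.intervalIntegrable
    rw [huIcc]
    apply continuousOn_id.div ((continuousOn_const.sub (hg.pow 2)).sqrt)
    intro r hr
    exact (Real.sqrt_pos.2 (hgp r hr)).ne'
  have hcf : ContinuousOn f (Icc 0 c) := by
    apply Continuous.continuousOn; rw [hf]; fun_prop
  have hIf := hint f hcf hposf
  have hI1 : IntervalIntegrable (fun r => r / Real.sqrt (1 - m₁ ^ 2 * r ^ 2)) volume 0 c := by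
    have := hint (fun r => m₁ * r) (by fun_prop)
      (by intro r hr; have := hpos1 r hr; simpa [mul_pow] using this)
    simpa [mul_pow] using this
  have hI2 : IntervalIntegrable (fun r => r / Real.sqrt (1 - m₂ ^ 2 * r ^ 2)) volume 0 c := by
    have := hint (fun r => m₂ * r) (by fun_prop)
      (by intro r hr; have := hpos2 r hr; simpa [mul_pow] using this)
    simpa [mul_pow] using this
  -- pointwise strict bounds on Ioo
  have hlow : ∀ r ∈ Ioo (0:ℝ) c, r / Real.sqrt (1 - m₁ ^ 2 * r ^ 2)
      < r / Real.sqrt (1 - (f r) ^ 2) := by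
    intro r hr
    obtain ⟨h1, h2⟩ := hr
    have hrIcc : r ∈ Icc (0:ℝ) c := ⟨h1.le, h2.le⟩
    have hfr : m₁ * r < f r := by simp only [hf, hm₁]; nlinarith [mul_pos (mul_pos ha h1) (mul_pos h1 h1)]
    have hfr0 : 0 < m₁ * r := by positivity
    have hsq : (1 - (f r) ^ 2) < 1 - m₁ ^ 2 * r ^ 2 := by nlinarith
    apply div_lt_div_of_pos_left h1 (Real.sqrt_pos.2 (hposf r hrIcc))
    exact Real.sqrt_lt_sqrt (hposf r hrIcc).le hsq
  have hhigh : ∀ r ∈ Ioo (0:ℝ) c, r / Real.sqrt (1 - (f r) ^ 2)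
      < r / Real.sqrt (1 - m₂ ^ 2 * r ^ 2) := by
    intro r hr
    obtain ⟨h1, h2⟩ := hr
    have hrIcc : r ∈ Icc (0:ℝ) c := ⟨h1.le, h2.le⟩
    have hfr : f r < m₂ * r := by simp only [hf, hm₂]; nlinarith [mul_lt_mul_of_pos_left (mul_self_lt_mul_self h1.le h2) (mul_pos ha h1)]
    have hfr0 : 0 < f r := by simp only [hf]; positivity
    have hsq : (1 - m₂ ^ 2 * r ^ 2) < 1 - (f r) ^ 2 := by nlinarith
    apply div_lt_div_of_pos_left h1 (Real.sqrt_pos.2 (hpos2 r hrIcc))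
    exact Real.sqrt_lt_sqrt (hpos2 r hrIcc).le hsq
  have hL := aux_lt hc hI1 hIf hlow
  have hH := aux_lt hc hIf hI2 hhigh
  rw [aux_int m₁ c hm₁0 hc hm₁c] at hL
  rw [aux_int m₂ c hm₂0 hc hm₂c] at hH
  have hπ : 0 < Real.pi := Real.pi_pos
  constructor
  · rw [hcong]
    have hs : Real.sqrt (4 - b ^ 2 * c ^ 2) = 2 * Real.sqrt (1 - m₁ ^ 2 * c ^ 2) := by
      rw [show (4:ℝ) - b ^ 2 * c ^ 2 = 2 ^ 2 * (1 - m₁ ^ 2 * c ^ 2) by rw [hm₁]; ring,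
        Real.sqrt_mul (by norm_num), Real.sqrt_sq (by norm_num)]
    rw [hs]
    have hb2 : (0:ℝ) < b ^ 2 := by positivity
    rw [hm₁] at hL ⊢
    calc 4 * Real.pi / b ^ 2 * (2 - 2 * Real.sqrt (1 - (b / 2) ^ 2 * c ^ 2))
        = 2 * Real.pi * ((1 - Real.sqrt (1 - (b / 2) ^ 2 * c ^ 2)) / (b / 2) ^ 2) := by
          field_simp; ring
      _ < 2 * Real.pi * ∫ r in (0:ℝ)..c, r / Real.sqrt (1 - f r ^ 2) := by
          apply mul_lt_mul_of_pos_left hL (by positivity)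
  · rw [hcong]
    set K : ℝ := a * c ^ 2 + 2 * b with hK
    have hK0 : 0 < K := by positivity
    have hs : Real.sqrt (16 - c ^ 2 * K ^ 2) = 4 * Real.sqrt (1 - m₂ ^ 2 * c ^ 2) := by
      rw [show (16:ℝ) - c ^ 2 * K ^ 2 = 4 ^ 2 * (1 - m₂ ^ 2 * c ^ 2) by rw [hm₂, hK]; ring,
        Real.sqrt_mul (by norm_num), Real.sqrt_sq (by norm_num)]
    rw [hs]
    have hm₂K : m₂ = K / 4 := by rw [hm₂, hK]
    calc 2 * Real.pi * ∫ r in (0:ℝ)..c, r / Real.sqrt (1 - f r ^ 2)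
        < 2 * Real.pi * ((1 - Real.sqrt (1 - m₂ ^ 2 * c ^ 2)) / m₂ ^ 2) := by
          apply mul_lt_mul_of_pos_left hH (by positivity)
      _ = 8 * Real.pi * (4 - 4 * Real.sqrt (1 - m₂ ^ 2 * c ^ 2)) / K ^ 2 := by
          rw [hm₂K]; field_simp; ring
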